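/- For all sufficiently large odd n, t(n) ≥ 0.0833·n². That is, there exists N such that for every odd integer n ≥ N there is a peaceful battle (B,W) on the n×n torus 𝕋_n with |B| = |W| ≥ 0.0833·n². -/

import Mathlib

open Finset

/-- The cells of the `n × n` board, i.e. `[n] × [n]` with `[n] = {1, …, n}`. -/
def cells (n : ℕ) : Finset (ℕ × ℕ) := Finset.Icc 1 n ×ˢ Finset.Icc 1 n

/-- The hyperedges of the `n × n` torus `𝕋_n`: rows, columns, `ℤ_n`-diagonals and
`ℤ_n`-skew-diagonals. -/
def torusEdges (n : ℕ) : Set (Finset (ℕ × ℕ)) :=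
  {e | (∃ i ∈ Finset.Icc 1 n, e = (cells n).filter (fun p => p.1 = i)) ∨
       (∃ j ∈ Finset.Icc 1 n, e = (cells n).filter (fun p => p.2 = j)) ∨
       (∃ k : ZMod n, e = (cells n).filter (fun p => (p.1 : ZMod n) - (p.2 : ZMod n) = k)) ∨
       (∃ k : ZMod n, e = (cells n).filter (fun p => (p.1 : ZMod n) + (p.2 : ZMod n) = k))}

/-- A peaceful battle on the `n × n` torus `𝕋_n`: disjoint sets `B, W ⊆ [n] × [n]` such that
no hyperedge meets both. -/
def IsPeacefulTorus (n : ℕ) (B W : Finset (ℕ × ℕ)) : Prop :=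
  B ⊆ cells n ∧ W ⊆ cells n ∧ Disjoint B W ∧
    ∀ e ∈ torusEdges n, e ∩ B = ∅ ∨ e ∩ W = ∅

/-- army B -/
def armyB (n : ℕ) : Finset (ℕ × ℕ) :=
  (cells n).filter (fun p => p.1 + 4 * (n / 12) ≤ n ∧ p.2 ≤ 4 * (n / 12) ∧
    ((p.1 < p.2 + 2 * (n / 12) ∧ p.1 + p.2 < 6 * (n / 12) ∧ (p.1 + p.2) % 2 = 1) ∨
     (p.2 + 2 * (n / 12) ≤ p.1 ∧ 6 * (n / 12) ≤ p.1 + p.2 ∧ (p.1 + p.2) % 2 = 0)))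

/-- army W -/
def armyW (n : ℕ) : Finset (ℕ × ℕ) :=
  (cells n).filter (fun p => n < p.1 + 4 * (n / 12) ∧ 4 * (n / 12) < p.2 ∧
    ((p.1 < p.2 + 2 * (n / 12) ∧ 6 * (n / 12) + n ≤ p.1 + p.2 ∧ (p.1 + p.2) % 2 = 0) ∨
     (p.2 + 2 * (n / 12) ≤ p.1 ∧ p.1 + p.2 < 6 * (n / 12) + n ∧ (p.1 + p.2) % 2 = 1)))

lemma mem_armyB {n : ℕ} {p : ℕ × ℕ} : p ∈ armyB n ↔
    (1 ≤ p.1 ∧ p.1 ≤ n ∧ 1 ≤ p.2 ∧ p.2 ≤ n) ∧ p.1 + 4 * (n / 12) ≤ n ∧ p.2 ≤ 4 * (n / 12) ∧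
    ((p.1 < p.2 + 2 * (n / 12) ∧ p.1 + p.2 < 6 * (n / 12) ∧ (p.1 + p.2) % 2 = 1) ∨
     (p.2 + 2 * (n / 12) ≤ p.1 ∧ 6 * (n / 12) ≤ p.1 + p.2 ∧ (p.1 + p.2) % 2 = 0)) := by
  simp only [armyB, cells, Finset.mem_filter, Finset.mem_product, Finset.mem_Icc]
  tauto

lemma mem_armyW {n : ℕ} {p : ℕ × ℕ} : p ∈ armyW n ↔
    (1 ≤ p.1 ∧ p.1 ≤ n ∧ 1 ≤ p.2 ∧ p.2 ≤ n) ∧ n < p.1 + 4 * (n / 12) ∧ 4 * (n / 12) < p.2 ∧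
    ((p.1 < p.2 + 2 * (n / 12) ∧ 6 * (n / 12) + n ≤ p.1 + p.2 ∧ (p.1 + p.2) % 2 = 0) ∨
     (p.2 + 2 * (n / 12) ≤ p.1 ∧ p.1 + p.2 < 6 * (n / 12) + n ∧ (p.1 + p.2) % 2 = 1)) := by
  simp only [armyW, cells, Finset.mem_filter, Finset.mem_product, Finset.mem_Icc]
  tauto

lemma diagB {n : ℕ} (hn : 1000000 ≤ n) (hodd : n % 2 = 1) {p : ℕ × ℕ} (hp : p ∈ armyB n) :
    (p.1 + n - p.2 + (n - 2 * (n / 12))) % n % 2 = 0 := by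
  obtain ⟨⟨h1, h2, h3, h4⟩, h5, h6, hb⟩ := mem_armyB.mp hp
  rcases hb with ⟨hb1, hb2, hb3⟩ | ⟨hb1, hb2, hb3⟩
  · have e1 : p.1 + n - p.2 + (n - 2 * (n / 12)) = (p.1 + n - p.2 - 2 * (n / 12)) + n := by
      omega
    have e2 : (p.1 + n - p.2 - 2 * (n / 12)) % n = p.1 + n - p.2 - 2 * (n / 12) :=
      Nat.mod_eq_of_lt (by omega)
    rw [e1, Nat.add_mod_right, e2]
    omega
  · have e1 : p.1 + n - p.2 + (n - 2 * (n / 12)) = (p.1 - p.2 - 2 * (n / 12)) + n + n := by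
      omega
    have e2 : (p.1 - p.2 - 2 * (n / 12)) % n = p.1 - p.2 - 2 * (n / 12) :=
      Nat.mod_eq_of_lt (by omega)
    rw [e1, Nat.add_mod_right, Nat.add_mod_right, e2]
    omega

lemma diagW {n : ℕ} (hn : 1000000 ≤ n) (hodd : n % 2 = 1) {p : ℕ × ℕ} (hp : p ∈ armyW n) :
    (p.1 + n - p.2 + (n - 2 * (n / 12))) % n % 2 = 1 := by
  obtain ⟨⟨h1, h2, h3, h4⟩, h5, h6, hb⟩ := mem_armyW.mp hp
  rcases hb with ⟨hb1, hb2, hb3⟩ | ⟨hb1, hb2, hb3⟩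
  · have e1 : p.1 + n - p.2 + (n - 2 * (n / 12)) = (p.1 + n - p.2 - 2 * (n / 12)) + n := by
      omega
    have e2 : (p.1 + n - p.2 - 2 * (n / 12)) % n = p.1 + n - p.2 - 2 * (n / 12) :=
      Nat.mod_eq_of_lt (by omega)
    rw [e1, Nat.add_mod_right, e2]
    omega
  · have e1 : p.1 + n - p.2 + (n - 2 * (n / 12)) = (p.1 - p.2 - 2 * (n / 12)) + n + n := by
      omega
    have e2 : (p.1 - p.2 - 2 * (n / 12)) % n = p.1 - p.2 - 2 * (n / 12) :=
      Nat.mod_eq_of_lt (by omega)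
    rw [e1, Nat.add_mod_right, Nat.add_mod_right, e2]
    omega

lemma skewB {n : ℕ} (hn : 1000000 ≤ n) (hodd : n % 2 = 1) {p : ℕ × ℕ} (hp : p ∈ armyB n) :
    (p.1 + p.2 + (n - 6 * (n / 12))) % n % 2 = 0 := by
  obtain ⟨⟨h1, h2, h3, h4⟩, h5, h6, hb⟩ := mem_armyB.mp hp
  rcases hb with ⟨hb1, hb2, hb3⟩ | ⟨hb1, hb2, hb3⟩
  · have e2 : (p.1 + p.2 + (n - 6 * (n / 12))) % n = p.1 + p.2 + (n - 6 * (n / 12)) :=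
      Nat.mod_eq_of_lt (by omega)
    rw [e2]
    omega
  · have e1 : p.1 + p.2 + (n - 6 * (n / 12)) = (p.1 + p.2 - 6 * (n / 12)) + n := by omega
    have e2 : (p.1 + p.2 - 6 * (n / 12)) % n = p.1 + p.2 - 6 * (n / 12) :=
      Nat.mod_eq_of_lt (by omega)
    rw [e1, Nat.add_mod_right, e2]
    omega

lemma skewW {n : ℕ} (hn : 1000000 ≤ n) (hodd : n % 2 = 1) {p : ℕ × ℕ} (hp : p ∈ armyW n) :
    (p.1 + p.2 + (n - 6 * (n / 12))) % n % 2 = 1 := by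
  obtain ⟨⟨h1, h2, h3, h4⟩, h5, h6, hb⟩ := mem_armyW.mp hp
  rcases hb with ⟨hb1, hb2, hb3⟩ | ⟨hb1, hb2, hb3⟩
  · have e1 : p.1 + p.2 + (n - 6 * (n / 12)) = (p.1 + p.2 - 6 * (n / 12) - n) + n + n := by
      omega
    have e2 : (p.1 + p.2 - 6 * (n / 12) - n) % n = p.1 + p.2 - 6 * (n / 12) - n :=
      Nat.mod_eq_of_lt (by omega)
    rw [e1, Nat.add_mod_right, Nat.add_mod_right, e2]
    omega
  · have e1 : p.1 + p.2 + (n - 6 * (n / 12)) = (p.1 + p.2 - 6 * (n / 12)) + n := by omega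
    have e2 : (p.1 + p.2 - 6 * (n / 12)) % n = p.1 + p.2 - 6 * (n / 12) :=
      Nat.mod_eq_of_lt (by omega)
    rw [e1, Nat.add_mod_right, e2]
    omega

lemma cast_diff {n : ℕ} (a b : ℕ) (hb : b ≤ a + n) :
    ((a + n - b : ℕ) : ZMod n) = (a : ZMod n) - (b : ZMod n) := by
  rw [Nat.cast_sub hb]
  push_cast [ZMod.natCast_self]
  ring

lemma peace {n : ℕ} (hn : 1000000 ≤ n) (hodd : n % 2 = 1) :
    IsPeacefulTorus n (armyB n) (armyW n) := by
  refine ⟨Finset.filter_subset _ _, Finset.filter_subset _ _, ?_, ?_⟩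
  · rw [Finset.disjoint_left]
    intro p hpB hpW
    obtain ⟨_, h5, _, _⟩ := mem_armyB.mp hpB
    obtain ⟨_, h5', _, _⟩ := mem_armyW.mp hpW
    omega
  · intro e he
    by_contra hc
    push_neg at hc
    obtain ⟨hc1, hc2⟩ := hc
    obtain ⟨p, hp⟩ := hc1
    obtain ⟨q, hq⟩ := hc2
    rw [Finset.mem_inter] at hp hq
    obtain ⟨hpe, hpB⟩ := hp
    obtain ⟨hqe, hqW⟩ := hq
    rcases he with ⟨i, _, rfl⟩ | ⟨j, _, rfl⟩ | ⟨k, rfl⟩ | ⟨k, rfl⟩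
    · have h1 := (Finset.mem_filter.mp hpe).2
      have h2 := (Finset.mem_filter.mp hqe).2
      obtain ⟨_, h5, _, _⟩ := mem_armyB.mp hpB
      obtain ⟨_, h5', _, _⟩ := mem_armyW.mp hqW
      omega
    · have h1 := (Finset.mem_filter.mp hpe).2
      have h2 := (Finset.mem_filter.mp hqe).2
      obtain ⟨_, _, h6, _⟩ := mem_armyB.mp hpB
      obtain ⟨_, _, h6', _⟩ := mem_armyW.mp hqW
      omega
    · have h1 := (Finset.mem_filter.mp hpe).2
      have h2 := (Finset.mem_filter.mp hqe).2
      obtain ⟨⟨_, _, _, h4⟩, _, _, _⟩ := mem_armyB.mp hpB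
      obtain ⟨⟨_, _, _, h4'⟩, _, _, _⟩ := mem_armyW.mp hqW
      have hcp : ((p.1 + n - p.2 : ℕ) : ZMod n) = k := by
        rw [cast_diff p.1 p.2 (by omega)]; exact h1
      have hcq : ((q.1 + n - q.2 : ℕ) : ZMod n) = k := by
        rw [cast_diff q.1 q.2 (by omega)]; exact h2
      have heq : (p.1 + n - p.2) % n = (q.1 + n - q.2) % n :=
        (ZMod.natCast_eq_natCast_iff' _ _ _).mp (hcp.trans hcq.symm)
      have heq2 : (p.1 + n - p.2 + (n - 2 * (n / 12))) % n
          = (q.1 + n - q.2 + (n - 2 * (n / 12))) % n :=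
        Nat.ModEq.add_right _ heq
      have hB := diagB hn hodd hpB
      have hW := diagW hn hodd hqW
      omega
    · have h1 := (Finset.mem_filter.mp hpe).2
      have h2 := (Finset.mem_filter.mp hqe).2
      have hcp : ((p.1 + p.2 : ℕ) : ZMod n) = k := by push_cast; exact h1
      have hcq : ((q.1 + q.2 : ℕ) : ZMod n) = k := by push_cast; exact h2
      have heq : (p.1 + p.2) % n = (q.1 + q.2) % n :=
        (ZMod.natCast_eq_natCast_iff' _ _ _).mp (hcp.trans hcq.symm)
      have heq2 : (p.1 + p.2 + (n - 6 * (n / 12))) % n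
          = (q.1 + q.2 + (n - 6 * (n / 12))) % n :=
        Nat.ModEq.add_right _ heq
      have hB := skewB hn hodd hpB
      have hW := skewW hn hodd hqW
      omega

lemma peace_mono {n : ℕ} {B W B' W' : Finset (ℕ × ℕ)} (h : IsPeacefulTorus n B W)
    (hB : B' ⊆ B) (hW : W' ⊆ W) : IsPeacefulTorus n B' W' := by
  obtain ⟨h1, h2, h3, h4⟩ := h
  refine ⟨hB.trans h1, hW.trans h2, h3.mono hB hW, fun e he => ?_⟩
  rcases h4 e he with h5 | h5
  · left
    rw [← Finset.subset_empty, ← h5]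
    exact Finset.inter_subset_inter (Finset.Subset.refl e) hB
  · right
    rw [← Finset.subset_empty, ← h5]
    exact Finset.inter_subset_inter (Finset.Subset.refl e) hW

lemma count_ge (lo hi w ε : ℕ) (hε : ε ≤ 1) :
    hi ≤ 2 * ((Finset.Icc lo hi).filter (fun x => (x + w) % 2 = ε)).card + lo + 1 := by
  rcases le_or_gt hi (lo + 1) with h | h
  · omega
  · have hsub : (Finset.Icc ((lo + 1 - (ε + w) % 2) / 2) ((hi - (ε + w) % 2) / 2)).image
        (fun k => 2 * k + (ε + w) % 2) ⊆
        (Finset.Icc lo hi).filter (fun x => (x + w) % 2 = ε) := by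
      intro x hx
      simp only [Finset.mem_image, Finset.mem_Icc] at hx
      obtain ⟨k, hk, rfl⟩ := hx
      simp only [Finset.mem_filter, Finset.mem_Icc]
      omega
    have h2 := Finset.card_le_card hsub
    have h3 : ((Finset.Icc ((lo + 1 - (ε + w) % 2) / 2) ((hi - (ε + w) % 2) / 2)).image
        (fun k => 2 * k + (ε + w) % 2)).card
        = (hi - (ε + w) % 2) / 2 + 1 - (lo + 1 - (ε + w) % 2) / 2 := by
      rw [Finset.card_image_of_injective _
        (fun a b hab => by dsimp only at hab; omega : Function.Injective fun k => 2 * k + (ε + w) % 2),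
        Nat.card_Icc]
    rw [h3] at h2
    omega

lemma two_intervals_card (S : Finset (ℕ × ℕ)) (g : ℕ → ℕ × ℕ) (hg : Function.Injective g)
    (w lo1 hi1 lo2 hi2 : ℕ)
    (h1 : ∀ x, lo1 ≤ x → x ≤ hi1 → (x + w) % 2 = 1 → g x ∈ S)
    (h2 : ∀ x, lo2 ≤ x → x ≤ hi2 → (x + w) % 2 = 0 → g x ∈ S) :
    hi1 + hi2 ≤ 2 * S.card + lo1 + lo2 + 2 := by
  classical
  have hd : Disjoint ((Finset.Icc lo1 hi1).filter (fun x => (x + w) % 2 = 1))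
      ((Finset.Icc lo2 hi2).filter (fun x => (x + w) % 2 = 0)) := by
    rw [Finset.disjoint_left]
    intro a ha hb
    simp only [Finset.mem_filter] at ha hb
    omega
  have hsub : (((Finset.Icc lo1 hi1).filter (fun x => (x + w) % 2 = 1)) ∪
      ((Finset.Icc lo2 hi2).filter (fun x => (x + w) % 2 = 0))).image g ⊆ S := by
    intro p hp
    simp only [Finset.mem_image, Finset.mem_union, Finset.mem_filter, Finset.mem_Icc] at hp
    obtain ⟨x, hx | hx, rfl⟩ := hp
    · exact h1 x hx.1.1 hx.1.2 hx.2
    · exact h2 x hx.1.1 hx.1.2 hx.2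
  have hcard : ((Finset.Icc lo1 hi1).filter (fun x => (x + w) % 2 = 1)).card +
      ((Finset.Icc lo2 hi2).filter (fun x => (x + w) % 2 = 0)).card ≤ S.card := by
    rw [← Finset.card_union_of_disjoint hd, ← Finset.card_image_of_injective _ hg]
    exact Finset.card_le_card hsub
  have c1 := count_ge lo1 hi1 w 1 (by norm_num)
  have c2 := count_ge lo2 hi2 w 0 (by norm_num)
  omega

lemma gauss2 (a b : ℕ) (h : a ≤ b) :
    2 * (∑ j ∈ Finset.Ioc a b, j) + a * (a + 1) = b * (b + 1) := by
  induction b with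
  | zero =>
    interval_cases a
    simp
  | succ k ih =>
    rcases Nat.lt_or_ge a (k + 1) with h' | h'
    · have hak : a ≤ k := by omega
      rw [Finset.sum_Ioc_succ_top hak]
      have hik := ih hak
      have hexp : 2 * (∑ j ∈ Finset.Ioc a k, j + (k + 1)) + a * (a + 1)
          = 2 * (∑ j ∈ Finset.Ioc a k, j) + a * (a + 1) + 2 * (k + 1) := by ring
      rw [hexp, hik]
      ring
    · have : a = k + 1 := by omega
      subst this
      simp

lemma gaussZ (a b : ℕ) (h : a ≤ b) :
    2 * (∑ j ∈ Finset.Ioc a b, (j : ℤ)) = (b : ℤ) * (b + 1) - (a : ℤ) * (a + 1) := by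
  have h2 := gauss2 a b h
  have h3 : ((2 * (∑ j ∈ Finset.Ioc a b, j) + a * (a + 1) : ℕ) : ℤ)
      = ((b * (b + 1) : ℕ) : ℤ) := by rw [h2]
  push_cast at h3
  linarith

lemma sum_bound (a b : ℕ) (hab : a ≤ b) (f : ℕ → ℕ) (A B C D : ℤ)
    (h : ∀ j ∈ Finset.Ioc a b, A + B * (j : ℤ) ≤ 2 * (f j : ℤ) + C + D * (j : ℤ)) :
    2 * ((b : ℤ) - a) * A + B * ((b : ℤ) * (b + 1) - (a : ℤ) * (a + 1)) ≤
      4 * (∑ j ∈ Finset.Ioc a b, (f j : ℤ)) + 2 * ((b : ℤ) - a) * C +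
        D * ((b : ℤ) * (b + 1) - (a : ℤ) * (a + 1)) := by
  have hsum := Finset.sum_le_sum h
  have hba : ((b - a : ℕ) : ℤ) = (b : ℤ) - a := by push_cast [Nat.cast_sub hab]; ring
  have e1 : ∑ j ∈ Finset.Ioc a b, (A + B * (j : ℤ))
      = ((b : ℤ) - a) * A + B * (∑ j ∈ Finset.Ioc a b, (j : ℤ)) := by
    rw [Finset.sum_add_distrib, Finset.sum_const, ← Finset.mul_sum, nsmul_eq_mul,
      Nat.card_Ioc, hba]
  have e2 : ∑ j ∈ Finset.Ioc a b, (2 * (f j : ℤ) + C + D * (j : ℤ))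
      = 2 * (∑ j ∈ Finset.Ioc a b, (f j : ℤ)) + ((b : ℤ) - a) * C
        + D * (∑ j ∈ Finset.Ioc a b, (j : ℤ)) := by
    rw [Finset.sum_add_distrib, Finset.sum_add_distrib, Finset.sum_const, ← Finset.mul_sum,
      ← Finset.mul_sum, nsmul_eq_mul, Nat.card_Ioc, hba]
  rw [e1, e2] at hsum
  rw [← gaussZ a b hab]
  linarith
section Count
variable {n : ℕ}

lemma countB (hn : 1000000 ≤ n) (hodd : n % 2 = 1) :
    833 * (n : ℤ) ^ 2 ≤ 10000 * ((armyB n).card : ℤ) := by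
  set m := n / 12 with hm
  have hm1 : 12 * m ≤ n := by omega
  have hm2 : n ≤ 12 * m + 11 := by omega
  have hm3 : 83333 ≤ m := by omega
  set f : ℕ → ℕ := fun j => ((armyB n).filter (fun p => p.2 = j)).card with hf
  have hfib : (armyB n).card = ∑ j ∈ Finset.Ioc 0 n, f j :=
    Finset.card_eq_sum_card_fiberwise (fun p hp => by
      obtain ⟨⟨_, _, h3, h4⟩, _⟩ := mem_armyB.mp hp
      exact Finset.mem_Ioc.mpr ⟨h3, h4⟩)
  have hsub : ∑ j ∈ Finset.Ioc 0 (4 * m), f j ≤ (armyB n).card := by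
    rw [hfib]
    exact Finset.sum_le_sum_of_subset (Finset.Ioc_subset_Ioc_right (by omega))
  have hsplit : ∑ j ∈ Finset.Ioc 0 (2 * m), f j + ∑ j ∈ Finset.Ioc (2 * m) (4 * m), f j
      = ∑ j ∈ Finset.Ioc 0 (4 * m), f j :=
    Finset.sum_Ioc_consecutive _ (by omega) (by omega)
  have hseg1 : ∀ j ∈ Finset.Ioc 0 (2 * m),
      (n : ℤ) + 2 * (j : ℤ) ≤ 2 * (f j : ℤ) + (8 * (m : ℤ) + 4) + 0 * (j : ℤ) := by
    intro j hj
    rw [Finset.mem_Ioc] at hj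
    have key := two_intervals_card ((armyB n).filter (fun p => p.2 = j)) (fun x => (x, j))
      (fun a b hab => by simpa using congrArg Prod.fst hab)
      j 1 (j + 2 * m - 1) (6 * m - j) (n - 4 * m)
      (fun x hx1 hx2 hx3 => by
        simp only [Finset.mem_filter, mem_armyB]
        refine ⟨?_, trivial⟩
        omega)
      (fun x hx1 hx2 hx3 => by
        simp only [Finset.mem_filter, mem_armyB]
        refine ⟨?_, trivial⟩
        omega)
    have hkey : n + 2 * j ≤ 2 * f j + 8 * m + 4 := by
      have : f j = ((armyB n).filter (fun p => p.2 = j)).card := rfl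
      omega
    push_cast
    linarith [hkey]
  have hseg2 : ∀ j ∈ Finset.Ioc (2 * m) (4 * m),
      (n : ℤ) + 0 * (j : ℤ) ≤ 2 * (f j : ℤ) + 4 + 2 * (j : ℤ) := by
    intro j hj
    rw [Finset.mem_Ioc] at hj
    have key := two_intervals_card ((armyB n).filter (fun p => p.2 = j)) (fun x => (x, j))
      (fun a b hab => by simpa using congrArg Prod.fst hab)
      j 1 (6 * m - 1 - j) (j + 2 * m) (n - 4 * m)
      (fun x hx1 hx2 hx3 => by
        simp only [Finset.mem_filter, mem_armyB]
        refine ⟨?_, trivial⟩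
        omega)
      (fun x hx1 hx2 hx3 => by
        simp only [Finset.mem_filter, mem_armyB]
        refine ⟨?_, trivial⟩
        omega)
    have hkey : n ≤ 2 * f j + 2 * j + 4 := by
      have : f j = ((armyB n).filter (fun p => p.2 = j)).card := rfl
      omega
    push_cast
    linarith [hkey]
  have hb1 := sum_bound 0 (2 * m) (by omega) f (n : ℤ) 2 (8 * (m : ℤ) + 4) 0 hseg1
  have hb2 := sum_bound (2 * m) (4 * m) (by omega) f (n : ℤ) 0 4 2 hseg2
  have hsubZ : (∑ j ∈ Finset.Ioc 0 (2 * m), (f j : ℤ))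
      + (∑ j ∈ Finset.Ioc (2 * m) (4 * m), (f j : ℤ)) ≤ ((armyB n).card : ℤ) := by
    have hN : ∑ j ∈ Finset.Ioc 0 (2 * m), f j + ∑ j ∈ Finset.Ioc (2 * m) (4 * m), f j
        ≤ (armyB n).card := by rw [hsplit]; exact hsub
    exact_mod_cast hN
  push_cast at hb1 hb2
  have hnm : (n : ℤ) = 12 * (m : ℤ) + ((n : ℤ) - 12 * (m : ℤ)) := by ring
  set ρ : ℤ := (n : ℤ) - 12 * (m : ℤ) with hρ
  have hρ1 : 1 ≤ ρ := by
    have : 12 * m + 1 ≤ n := by omega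
    have : (12 * m + 1 : ℤ) ≤ (n : ℤ) := by exact_mod_cast this
    omega
  have hρ2 : ρ ≤ 11 := by
    have : (n : ℤ) ≤ 12 * m + 11 := by exact_mod_cast hm2
    omega
  have hmZ : (83333 : ℤ) ≤ (m : ℤ) := by exact_mod_cast hm3
  have hq1 : (83333 : ℤ) * m ≤ (m : ℤ) * m := by nlinarith
  have hq2 : (0 : ℤ) ≤ (m : ℤ) * ρ := mul_nonneg (Int.natCast_nonneg m) (by linarith)
  have hq3 : ρ * ρ ≤ 121 := by nlinarith
  have hnd : (n : ℤ) = 12 * (m : ℤ) + ρ := by rw [hρ]; ring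
  rw [hnd] at hb1 hb2 ⊢
  nlinarith [hb1, hb2, hsubZ, hq1, hq2, hq3]

set_option maxHeartbeats 2000000 in
lemma countW (hn : 1000000 ≤ n) (hodd : n % 2 = 1) :
    833 * (n : ℤ) ^ 2 ≤ 10000 * ((armyW n).card : ℤ) := by
  set m := n / 12 with hm
  set h : ℕ := (n + 1) / 2 with hh
  have hm1 : 12 * m ≤ n := by omega
  have hm2 : n ≤ 12 * m + 11 := by omega
  have hm3 : 83333 ≤ m := by omega
  have hh2 : 2 * h = n + 1 := by omega
  set f : ℕ → ℕ := fun i => ((armyW n).filter (fun p => p.1 = i)).card with hf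
  have hfib : (armyW n).card = ∑ i ∈ Finset.Ioc 0 n, f i :=
    Finset.card_eq_sum_card_fiberwise (fun p hp => by
      obtain ⟨⟨h1, h2, _, _⟩, _⟩ := mem_armyW.mp hp
      exact Finset.mem_Ioc.mpr ⟨h1, h2⟩)
  have hsub : ∑ i ∈ Finset.Ioc (n - 4 * m) n, f i ≤ (armyW n).card := by
    rw [hfib]
    exact Finset.sum_le_sum_of_subset (Finset.Ioc_subset_Ioc (by omega) le_rfl)
  have hsplit : ∑ i ∈ Finset.Ioc (n - 4 * m) (4 * m + h - 1), f i
      + ∑ i ∈ Finset.Ioc (4 * m + h - 1) n, f i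
      = ∑ i ∈ Finset.Ioc (n - 4 * m) n, f i :=
    Finset.sum_Ioc_consecutive _ (by omega) (by omega)
  have hseg1 : ∀ i ∈ Finset.Ioc (n - 4 * m) (4 * m + h - 1),
      (0 : ℤ) + 2 * (i : ℤ) ≤ 2 * (f i : ℤ) + (12 * (m : ℤ) + 3) + 0 * (i : ℤ) := by
    intro i hi
    rw [Finset.mem_Ioc] at hi
    have key := two_intervals_card ((armyW n).filter (fun p => p.1 = i)) (fun x => (i, x))
      (fun a b hab => by simpa using congrArg Prod.snd hab)
      i (4 * m + 1) (i - 2 * m) (6 * m + n - i) n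
      (fun x hx1 hx2 hx3 => by
        simp only [Finset.mem_filter, mem_armyW]
        refine ⟨?_, trivial⟩
        omega)
      (fun x hx1 hx2 hx3 => by
        simp only [Finset.mem_filter, mem_armyW]
        refine ⟨?_, trivial⟩
        omega)
    have hkey : 2 * i ≤ 2 * f i + 12 * m + 3 := by
      have : f i = ((armyW n).filter (fun p => p.1 = i)).card := rfl
      omega
    push_cast
    linarith [hkey]
  have hseg2 : ∀ i ∈ Finset.Ioc (4 * m + h - 1) n,
      (2 * (n : ℤ) + 4 * (m : ℤ)) + 0 * (i : ℤ) ≤ 2 * (f i : ℤ) + 5 + 2 * (i : ℤ) := by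
    intro i hi
    rw [Finset.mem_Ioc] at hi
    have key := two_intervals_card ((armyW n).filter (fun p => p.1 = i)) (fun x => (i, x))
      (fun a b hab => by simpa using congrArg Prod.snd hab)
      i (4 * m + 1) (6 * m + n - 1 - i) (i - 2 * m + 1) n
      (fun x hx1 hx2 hx3 => by
        simp only [Finset.mem_filter, mem_armyW]
        refine ⟨?_, trivial⟩
        omega)
      (fun x hx1 hx2 hx3 => by
        simp only [Finset.mem_filter, mem_armyW]
        refine ⟨?_, trivial⟩
        omega)
    have hkey : 2 * n + 4 * m ≤ 2 * f i + 2 * i + 5 := by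
      have : f i = ((armyW n).filter (fun p => p.1 = i)).card := rfl
      omega
    push_cast
    linarith [hkey]
  have hb1 := sum_bound (n - 4 * m) (4 * m + h - 1) (by omega) f 0 2 (12 * (m : ℤ) + 3) 0 hseg1
  have hb2 := sum_bound (4 * m + h - 1) n (by omega) f (2 * (n : ℤ) + 4 * (m : ℤ)) 0 5 2 hseg2
  have hsubZ : (∑ i ∈ Finset.Ioc (n - 4 * m) (4 * m + h - 1), (f i : ℤ))
      + (∑ i ∈ Finset.Ioc (4 * m + h - 1) n, (f i : ℤ)) ≤ ((armyW n).card : ℤ) := by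
    have hN : ∑ i ∈ Finset.Ioc (n - 4 * m) (4 * m + h - 1), f i
        + ∑ i ∈ Finset.Ioc (4 * m + h - 1) n, f i ≤ (armyW n).card := by
      rw [hsplit]; exact hsub
    exact_mod_cast hN
  have hc1 : ((n - 4 * m : ℕ) : ℤ) = (n : ℤ) - 4 * (m : ℤ) := by
    have : 4 * m ≤ n := by omega
    push_cast [Nat.cast_sub this]; ring
  have hc2 : ((4 * m + h - 1 : ℕ) : ℤ) = 4 * (m : ℤ) + (h : ℤ) - 1 := by
    have : 1 ≤ 4 * m + h := by omega
    push_cast [Nat.cast_sub this]; ring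
  rw [hc1, hc2] at hb1
  rw [hc2] at hb2
  push_cast at hb1 hb2
  set e : ℤ := (h : ℤ) - 6 * (m : ℤ) with he
  have he1 : 1 ≤ e := by
    have : 6 * m + 1 ≤ h := by omega
    have : (6 * m + 1 : ℤ) ≤ (h : ℤ) := by exact_mod_cast this
    omega
  have he2 : e ≤ 6 := by
    have : h ≤ 6 * m + 6 := by omega
    have : (h : ℤ) ≤ 6 * m + 6 := by exact_mod_cast this
    omega
  have hmZ : (83333 : ℤ) ≤ (m : ℤ) := by exact_mod_cast hm3
  have hq1 : (83333 : ℤ) * m ≤ (m : ℤ) * m := by nlinarith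
  have hq2 : (0 : ℤ) ≤ (m : ℤ) * e := mul_nonneg (Int.natCast_nonneg m) (by linarith)
  have hq2' : (m : ℤ) * e ≤ 6 * m := by nlinarith
  have hq3 : e * e ≤ 36 := by nlinarith
  have hnd : (n : ℤ) = 12 * (m : ℤ) + 2 * e - 1 := by
    have : (2 * h : ℤ) = (n : ℤ) + 1 := by exact_mod_cast hh2
    omega
  have hhd : (h : ℤ) = 6 * (m : ℤ) + e := by rw [he]; ring
  rw [hnd] at hb1 hb2 ⊢
  rw [hhd] at hb1 hb2
  nlinarith [hb1, hb2, hsubZ, hq1, hq2, hq2', hq3]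

end Count

/-- `t n` : the largest `m` so that some peaceful battle `(B, W)` on `𝕋_n` has `|B| = |W| = m`. -/
noncomputable def t (n : ℕ) : ℕ :=
  sSup {m : ℕ | ∃ B W : Finset (ℕ × ℕ), IsPeacefulTorus n B W ∧ B.card = m ∧ W.card = m}

/-- **Odd torus lower bound.** For all sufficiently large odd `n`, `t(n) ≥ 0.0833 n²`:
there is a peaceful battle `(B, W)` on `𝕋_n` with `|B| = |W| ≥ 0.0833 n²`. -/
theorem odd_torus_lower_bound :
    ∃ N : ℕ, ∀ n : ℕ, N ≤ n → Odd n →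
      ∃ B W : Finset (ℕ × ℕ), IsPeacefulTorus n B W ∧ B.card = W.card ∧
        (0.0833 : ℝ) * (n : ℝ) ^ 2 ≤ (B.card : ℝ) := by
  refine ⟨1000000, fun n hn hodd => ?_⟩
  have hodd' : n % 2 = 1 := Nat.odd_iff.mp hodd
  set k := min (armyB n).card (armyW n).card with hk
  obtain ⟨B', hB's, hB'c⟩ := Finset.exists_subset_card_eq (s := armyB n) (min_le_left _ _)
  obtain ⟨W', hW's, hW'c⟩ := Finset.exists_subset_card_eq (s := armyW n) (min_le_right _ _)
  have hpk : 833 * (n : ℤ) ^ 2 ≤ 10000 * (k : ℤ) := by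
    rcases min_cases (armyB n).card (armyW n).card with ⟨hc, _⟩ | ⟨hc, _⟩
    · rw [hk, hc]; exact countB hn hodd'
    · rw [hk, hc]; exact countW hn hodd'
  refine ⟨B', W', peace_mono (peace hn hodd') hB's hW's, by rw [hB'c, hW'c], ?_⟩
  rw [hB'c]
  have hR : (833 : ℝ) * (n : ℝ) ^ 2 ≤ 10000 * (k : ℝ) := by exact_mod_cast hpk
  have h0 : (0.0833 : ℝ) = 833 / 10000 := by norm_num
  rw [h0]
  linarith
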